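/- The commutative monoid generated by x, y subject to the relations xy = yx and x² = y² is cancellative and torsion-free but is not a unique product monoid (witnessed by X = Y = {x, y}). -/

import Mathlib

/-- A unique product monoid. -/
def IsUPM (G : Type*) [Monoid G] : Prop :=
  ∀ X Y : Finset G, X.Nonempty → Y.Nonempty →
    ∃ x ∈ X, ∃ y ∈ Y, ∀ x' ∈ X, ∀ y' ∈ Y, x' * y' = x * y → x' = x ∧ y' = y

/-- The defining relations of the monoid ⟨x, y ∣ xy = yx, x² = y²⟩. -/
inductive TwoGenRel : FreeMonoid (Fin 2) → FreeMonoid (Fin 2) → Prop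
  | comm : TwoGenRel (FreeMonoid.of 0 * FreeMonoid.of 1) (FreeMonoid.of 1 * FreeMonoid.of 0)
  | sq : TwoGenRel (FreeMonoid.of 0 * FreeMonoid.of 0) (FreeMonoid.of 1 * FreeMonoid.of 1)

/-- The monoid generated by `x, y` subject to `xy = yx` and `x² = y²`. -/
abbrev TwoGenMonoid := (conGen TwoGenRel).Quotient

namespace TGM

def X : TwoGenMonoid := (conGen TwoGenRel).mk' (FreeMonoid.of 0)
def Y : TwoGenMonoid := (conGen TwoGenRel).mk' (FreeMonoid.of 1)

lemma hcomm : X * Y = Y * X := by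
  rw [X, Y, ← map_mul, ← map_mul]
  exact (Con.eq _).mpr (ConGen.Rel.of _ _ TwoGenRel.comm)

lemma hsq : X * X = Y * Y := by
  rw [X, Y, ← map_mul, ← map_mul]
  exact (Con.eq _).mpr (ConGen.Rel.of _ _ TwoGenRel.sq)

def f : Fin 2 → Multiplicative (ℕ × ZMod 2) :=
  fun i => Multiplicative.ofAdd (1, if i = 0 then 0 else 1)

def φ : TwoGenMonoid →* Multiplicative (ℕ × ZMod 2) :=
  (conGen TwoGenRel).lift (FreeMonoid.lift f)
    (Con.conGen_le.2 (by
      rintro _ _ (_ | _) <;>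
        simp only [Con.ker_rel, map_mul, FreeMonoid.lift_eval_of, f] <;> decide))

lemma φX : φ X = Multiplicative.ofAdd (1, 0) := by
  simp [φ, X, Con.lift_mk', f]

lemma φY : φ Y = Multiplicative.ofAdd (1, 1) := by
  simp [φ, Y, Con.lift_mk', f]

lemma ind (P : TwoGenMonoid → Prop) (h1 : P 1)
    (hx : ∀ m, P m → P (X * m)) (hy : ∀ m, P m → P (Y * m)) : ∀ m, P m := by
  intro m
  refine Con.induction_on m ?_
  intro w
  induction w using FreeMonoid.recOn with
  | one => exact h1
  | of_mul i t iht =>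
    have : ((FreeMonoid.of i * t : FreeMonoid (Fin 2)) : TwoGenMonoid)
        = (conGen TwoGenRel).mk' (FreeMonoid.of i) * (t : TwoGenMonoid) := by
      rfl
    rw [this]
    fin_cases i
    · exact hx _ iht
    · exact hy _ iht


lemma Xcomm : ∀ b : TwoGenMonoid, X * b = b * X := by
  refine ind _ (by simp) ?_ ?_
  · intro m ih; rw [mul_assoc, ih, ← mul_assoc]
  · intro m ih; rw [← mul_assoc, hcomm, mul_assoc, ih, ← mul_assoc]

lemma Ycomm : ∀ b : TwoGenMonoid, Y * b = b * Y := by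
  refine ind _ (by simp) ?_ ?_
  · intro m ih; rw [← mul_assoc, ← hcomm, mul_assoc, ih, ← mul_assoc]
  · intro m ih; rw [mul_assoc, ih, ← mul_assoc]

lemma comm : ∀ a b : TwoGenMonoid, a * b = b * a := by
  refine ind _ (by simp) ?_ ?_
  · intro m ih b; rw [mul_assoc, ih, ← mul_assoc, Xcomm b, mul_assoc]
  · intro m ih b; rw [mul_assoc, ih, ← mul_assoc, Ycomm b, mul_assoc]

lemma nf : ∀ m : TwoGenMonoid, ∃ a : ℕ, m = X ^ a ∨ m = X ^ a * Y := by
  refine ind _ ⟨0, Or.inl (pow_zero X).symm⟩ ?_ ?_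
  · rintro m ⟨a, h | h⟩
    · exact ⟨a + 1, Or.inl (by rw [h, pow_succ, Xcomm])⟩
    · exact ⟨a + 1, Or.inr (by rw [h, ← mul_assoc, pow_succ, Xcomm])⟩
  · rintro m ⟨a, h | h⟩
    · exact ⟨a, Or.inr (by rw [h, Ycomm])⟩
    · exact ⟨a + 2, Or.inl (by rw [h, ← mul_assoc, Ycomm (X ^ a), mul_assoc, ← hsq,
        ← mul_assoc, ← pow_succ, ← pow_succ])⟩

lemma φXpow (a : ℕ) : φ (X ^ a) = Multiplicative.ofAdd (a, 0) := by
  rw [map_pow, φX, ← ofAdd_nsmul]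
  congr 1
  simp [Prod.smul_def]

lemma φXpowY (a : ℕ) : φ (X ^ a * Y) = Multiplicative.ofAdd (a + 1, 1) := by
  rw [map_mul, φXpow, φY, ← ofAdd_add]
  congr 1

lemma φinj : Function.Injective φ := by
  intro m m' h
  obtain ⟨a, rfl | rfl⟩ := nf m <;> obtain ⟨b, rfl | rfl⟩ := nf m'
  · rw [φXpow, φXpow] at h
    have : a = b := by simpa [Prod.ext_iff] using Multiplicative.ofAdd.injective h
    rw [this]
  · rw [φXpow, φXpowY] at h
    have := Multiplicative.ofAdd.injective h
    simp only [Prod.ext_iff] at this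
    exact absurd this.2 (by decide)
  · rw [φXpow, φXpowY] at h
    have := Multiplicative.ofAdd.injective h
    simp only [Prod.ext_iff] at this
    exact absurd this.2 (by decide)
  · rw [φXpowY, φXpowY] at h
    have : a = b := by simpa [Prod.ext_iff] using Multiplicative.ofAdd.injective h
    rw [this]

lemma XneY : X ≠ Y := by
  intro h
  have := congrArg φ h
  rw [φX, φY] at this
  exact absurd (Multiplicative.ofAdd.injective this) (by decide)

end TGM


/-- The monoid ⟨x, y ∣ xy = yx, x² = y²⟩ is commutative, cancellative and
torsion-free, but it is not a unique product monoid. -/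
theorem stmt2 :
    (∀ a b : TwoGenMonoid, a * b = b * a) ∧
    (∀ a b c : TwoGenMonoid, (a * b = a * c → b = c) ∧ (b * a = c * a → b = c)) ∧
    (∀ a : TwoGenMonoid, a ≠ 1 → ∀ n : ℕ, a ^ n = 1 → n = 0) ∧
    ¬ IsUPM TwoGenMonoid := by
  refine ⟨TGM.comm, ?_, ?_, ?_⟩
  · intro a b c
    constructor
    · intro h
      apply TGM.φinj
      have := congrArg TGM.φ h
      rw [map_mul, map_mul] at this
      exact mul_left_cancel this
    · intro h
      apply TGM.φinj
      have := congrArg TGM.φ h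
      rw [map_mul, map_mul] at this
      exact mul_right_cancel this
  · intro a ha n hn
    have h1 : TGM.φ (a ^ n) = 1 := by rw [hn, map_one]
    rw [map_pow] at h1
    obtain ⟨p, rfl | rfl⟩ := TGM.nf a
    · rw [TGM.φXpow, ← ofAdd_nsmul] at h1
      have h2 : (n • ((p, 0) : ℕ × ZMod 2)) = 0 := Multiplicative.ofAdd.injective h1
      have h3 : n * p = 0 := by
        have := congrArg Prod.fst h2
        simpa [Prod.smul_def, smul_eq_mul] using this
      have hp : p ≠ 0 := by
        rintro rfl
        exact ha (pow_zero _)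
      exact (Nat.mul_eq_zero.mp h3).resolve_right hp
    · rw [TGM.φXpowY, ← ofAdd_nsmul] at h1
      have h2 : (n • ((p + 1, 1) : ℕ × ZMod 2)) = 0 := Multiplicative.ofAdd.injective h1
      have h3 : n * (p + 1) = 0 := by
        have := congrArg Prod.fst h2
        simpa [Prod.smul_def, smul_eq_mul] using this
      exact (Nat.mul_eq_zero.mp h3).resolve_right (Nat.succ_ne_zero p)
  · classical
    intro h
    obtain ⟨x, hx, y, hy, hu⟩ := h {TGM.X, TGM.Y} {TGM.X, TGM.Y}
      ⟨TGM.X, by simp⟩ ⟨TGM.X, by simp⟩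
    simp only [Finset.mem_insert, Finset.mem_singleton] at hx hy
    have hXm : TGM.X ∈ ({TGM.X, TGM.Y} : Finset TwoGenMonoid) := by simp
    have hYm : TGM.Y ∈ ({TGM.X, TGM.Y} : Finset TwoGenMonoid) := by simp
    rcases hx with rfl | rfl <;> rcases hy with rfl | rfl
    · exact TGM.XneY ((hu TGM.Y hYm TGM.Y hYm TGM.hsq.symm).1.symm)
    · exact TGM.XneY ((hu TGM.Y hYm TGM.X hXm TGM.hcomm.symm).1.symm)
    · exact TGM.XneY ((hu TGM.X hXm TGM.Y hYm TGM.hcomm).1)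
    · exact TGM.XneY ((hu TGM.X hXm TGM.X hXm TGM.hsq).1)
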